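/- With the pointwise hypersurface model below, suppose δ = 0, μ = 0, c ≠ 0, and the structure Jacobi operator l is pseudo-parallel with function value L ∈ ℝ. Then αγ = β² (so in particular if α ≠ 0 then γ = β²/α, the relation obtained in the proof of Lemma 4.2 on the set Ω₁₁). -/

import Mathlib

open scoped RealInnerProductSpace

/-- From the proof of Lemma 4.2: if `δ = 0`, `μ = 0`, `c ≠ 0` and the structure Jacobi operator
is pseudo-parallel with function value `L`, then `αγ = β²`. -/
theorem pseudo_parallel_alpha_gamma_eq_beta_sq
    {V : Type*} [NormedAddCommGroup V] [InnerProductSpace ℝ V]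
    (hdim : Module.finrank ℝ V = 3)
    (u w x : V) (hon : Orthonormal ℝ ![u, w, x])
    (φ : V →ₗ[ℝ] V) (hφu : φ u = w) (hφw : φ w = -u) (hφx : φ x = 0)
    (A : V →ₗ[ℝ] V) (hA : ∀ X Y : V, ⟪A X, Y⟫ = ⟪X, A Y⟫)
    (α β γ δ μ c L : ℝ)
    (hAu : A u = γ • u + δ • w + β • x)
    (hAw : A w = δ • u + μ • w)
    (hAx : A x = α • x + β • u)
    (R : V → V → V → V)
    (hR : ∀ X Y Z : V, R X Y Z =
      (c / 4) • (⟪Y, Z⟫ • X - ⟪X, Z⟫ • Y + ⟪φ Y, Z⟫ • φ X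
        - ⟪φ X, Z⟫ • φ Y - (2 * ⟪φ X, Y⟫) • φ Z)
      + ⟪A Y, Z⟫ • A X - ⟪A X, Z⟫ • A Y)
    (l : V → V) (hl : ∀ X : V, l X = R X x x)
    (hpp : ∀ X Y Z : V,
      R X Y (l Z) - l (R X Y Z)
        = L • ((⟪Y, l Z⟫ • X - ⟪l Z, X⟫ • Y)
            - l (⟪Y, Z⟫ • X - ⟪Z, X⟫ • Y)))
    (hδ : δ = 0)
    (hμ : μ = 0)
    (hc : c ≠ 0) :
    α * γ = β ^ 2 := by
  subst hδ hμ
  have h := orthonormal_iff_ite.mp hon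
  have huu : ⟪u,u⟫ = 1 := by simpa using h 0 0
  have hww : ⟪w,w⟫ = 1 := by simpa using h 1 1
  have hxx : ⟪x,x⟫ = 1 := by simpa using h 2 2
  have huw : ⟪u,w⟫ = 0 := by simpa using h 0 1
  have hwu : ⟪w,u⟫ = 0 := by simpa using h 1 0
  have hux : ⟪u,x⟫ = 0 := by simpa using h 0 2
  have hxu : ⟪x,u⟫ = 0 := by simpa using h 2 0
  have hwx : ⟪w,x⟫ = 0 := by simpa using h 1 2
  have hxw : ⟪x,w⟫ = 0 := by simpa using h 2 1
  have lu : l u = (c/4 + (α*γ - β^2)) • u := by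
    rw [hl, hR]
    simp [hφu, hφw, hφx, hAu, hAw, hAx, huu, hww, hxx, huw, hwu, hux, hxu, hwx, hxw,
      inner_add_left, inner_add_right, inner_smul_left, inner_smul_right,
      inner_sub_left, inner_sub_right, -inner_self_eq_norm_sq_to_K]
    module
  have lw : l w = (c/4) • w := by
    rw [hl, hR]
    simp [hφu, hφw, hφx, hAu, hAw, hAx, huu, hww, hxx, huw, hwu, hux, hxu, hwx, hxw,
      inner_add_left, inner_add_right, inner_smul_left, inner_smul_right,
      inner_sub_left, inner_sub_right, -inner_self_eq_norm_sq_to_K]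
    all_goals module
  have lnegx : l (-x) = 0 := by
    rw [hl, hR]
    simp [hφu, hφw, hφx, hAu, hAw, hAx, huu, hww, hxx, huw, hwu, hux, hxu, hwx, hxw,
      inner_add_left, inner_add_right, inner_smul_left, inner_smul_right,
      inner_sub_left, inner_sub_right, inner_neg_left, inner_neg_right, -inner_self_eq_norm_sq_to_K]
    all_goals module
  have Rwxw : R w x w = (-(c/4)) • x := by
    rw [hR]
    simp [hφu, hφw, hφx, hAu, hAw, hAx, huu, hww, hxx, huw, hwu, hux, hxu, hwx, hxw,
      inner_add_left, inner_add_right, inner_smul_left, inner_smul_right,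
      inner_sub_left, inner_sub_right, -inner_self_eq_norm_sq_to_K]
    all_goals module
  have h1 : R w x ((c/4) • w) = (-(c^2/16)) • x := by
    rw [hR]
    simp [hφu, hφw, hφx, hAu, hAw, hAx, huu, hww, hxx, huw, hwu, hux, hxu, hwx, hxw,
      inner_add_left, inner_add_right, inner_smul_left, inner_smul_right,
      inner_sub_left, inner_sub_right, smul_smul, -inner_self_eq_norm_sq_to_K]
    all_goals module
  have hl1 : l ((-(c/4)) • x) = 0 := by
    rw [hl, hR]
    simp [hφu, hφw, hφx, hAu, hAw, hAx, huu, hww, hxx, huw, hwu, hux, hxu, hwx, hxw,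
      inner_add_left, inner_add_right, inner_smul_left, inner_smul_right,
      inner_sub_left, inner_sub_right, inner_neg_left, inner_neg_right, smul_smul, -inner_self_eq_norm_sq_to_K]
    all_goals module
  have Ruww : R u w w = c • u := by
    rw [hR]
    simp [hφu, hφw, hφx, hAu, hAw, hAx, huu, hww, hxx, huw, hwu, hux, hxu, hwx, hxw,
      inner_add_left, inner_add_right, inner_smul_left, inner_smul_right,
      inner_sub_left, inner_sub_right, inner_neg_left, inner_neg_right, -inner_self_eq_norm_sq_to_K]
    all_goals module
  have h2 : R u w ((c/4) • w) = (c^2/4) • u := by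
    rw [hR]
    simp [hφu, hφw, hφx, hAu, hAw, hAx, huu, hww, hxx, huw, hwu, hux, hxu, hwx, hxw,
      inner_add_left, inner_add_right, inner_smul_left, inner_smul_right,
      inner_sub_left, inner_sub_right, inner_neg_left, inner_neg_right, smul_smul, -inner_self_eq_norm_sq_to_K]
    all_goals module
  have hlcu : l (c • u) = (c*(c/4 + (α*γ - β^2))) • u := by
    rw [hl, hR]
    simp [hφu, hφw, hφx, hAu, hAw, hAx, huu, hww, hxx, huw, hwu, hux, hxu, hwx, hxw,
      inner_add_left, inner_add_right, inner_smul_left, inner_smul_right,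
      inner_sub_left, inner_sub_right, smul_smul, -inner_self_eq_norm_sq_to_K]
    all_goals module
  have e1 := hpp w x w
  simp only [lw, Rwxw, h1, hl1, hxw, hww, hwx, hxx, zero_smul, one_smul, zero_sub,
    lnegx, inner_smul_left, inner_smul_right, mul_zero, mul_one,
    RCLike.ofReal_real_eq_id, id] at e1
  have e2 := hpp u w w
  simp only [lw, Ruww, h2, hlcu, hww, hwu, huw, zero_smul, one_smul, sub_zero,
    lu, inner_smul_left, inner_smul_right, mul_zero, mul_one,
    RCLike.ofReal_real_eq_id, id] at e2
  have s1 : -(c^2/16) = L * (-(c/4)) := by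
    have := congrArg (fun z : V => (⟪z, x⟫:ℝ)) e1
    simp only [inner_sub_left, inner_neg_left, inner_smul_left, inner_zero_left, hxx, hwx, hux,
      starRingEnd_apply, star_trivial, mul_one, mul_zero, sub_zero] at this
    linarith
  have s2 : c^2/4 - c*(c/4 + (α*γ - β^2)) = L * (c/4 - (c/4 + (α*γ - β^2))) := by
    have := congrArg (fun z : V => (⟪z, u⟫:ℝ)) e2
    simp only [inner_sub_left, inner_neg_left, inner_smul_left, inner_zero_left, huu, hwu, hxu,
      starRingEnd_apply, star_trivial, mul_one, mul_zero, sub_zero] at this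
    linarith
  have hL : L = c/4 := by
    have h4 : (c:ℝ)/4 ≠ 0 := div_ne_zero hc (by norm_num)
    have : L * (c/4) = (c/4) * (c/4) := by ring_nf; ring_nf at s1; linarith
    exact mul_right_cancel₀ h4 this
  subst hL
  have ht : c * (α*γ - β^2) = 0 := by linear_combination (-4/3 : ℝ) * s2
  have := (mul_eq_zero.mp ht).resolve_left hc
  linarith
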